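/- Fix a countable set K partitioned into a nonempty subset K_W and a subset K_B, a generator matrix V on K, a stochastic matrix R on K, an integer N ≥ 0, and λ(n) > 0 for n ∈ {0,…,N}. For n ∈ {0,…,N+1} define the K×K matrix Q̃(n) by q̃(n;k,m) = λ(n)·R(k,m)·1[k∈K_W]·1[n≤N] + v(k,m) for k ≠ m and q̃(n;k,k) = −( 1[k∈K_W]·1[n≤N]·λ(n)·(1−R(k,k)) + Σ_{m≠k} v(k,m) ). Let θ : K → (0,∞) be strictly positive with Σ_{k∈K} θ(k) = 1 and such that for every k ∈ K the families (θ(m)·R(m,k))_{m∈K_W} and (θ(m)·v(m,k))_{m∈K∖{k}} are summable. Then the following are equivalent: (a) θ·Q̃(n) = 0 for every n ∈ {0,…,N+1}; (b) θ·V = 0 (i.e. Σ_{m≠k} θ(m)·v(m,k) = θ(k)·Σ_{m≠k} v(k,m) for all k), the set K_W is closed for R (i.e. Σ_{m∈K_W} R(k,m) = 1 for every k ∈ K_W), and the restriction of θ to K_W is stationary for the restricted matrix, i.e. Σ_{m∈K_W} θ(m)·R(m,k) = θ(k) for every k ∈ K_W. -/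

import Mathlib

/-- For the finite-capacity loss system, θ·Q̃(n) = 0 for all n ∈ {0,…,N+1}
iff θ·V = 0, K_W is closed for R, and θ restricted to K_W is stationary for R
restricted to K_W. -/
theorem stmt_2 {K : Type*} [Countable K] [DecidableEq K]
    (KW KB : Set K) [∀ k, Decidable (k ∈ KW)]
    (hKW : KW.Nonempty)
    (hpart : ∀ k : K, k ∈ KW ↔ k ∉ KB)
    (v : K → K → ℝ)
    (hv_offdiag : ∀ k m, k ≠ m → 0 ≤ v k m)
    (hv_summable : ∀ k, Summable (fun m : {m : K // m ≠ k} => v k (m : K)))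
    (hv_diag : ∀ k, v k k = - ∑' m : {m : K // m ≠ k}, v k (m : K))
    (R : K → K → ℝ)
    (hR_nonneg : ∀ k m, 0 ≤ R k m)
    (hR_row : ∀ k, HasSum (fun m => R k m) 1)
    (N : ℕ)
    (lam : ℕ → ℝ) (hlam : ∀ n, n ≤ N → 0 < lam n)
    (θ : K → ℝ) (hθ_pos : ∀ k, 0 < θ k) (hθ_sum : HasSum θ 1)
    (hθR_summable : ∀ k : K, Summable (fun m : KW => θ (m : K) * R (m : K) k))
    (hθv_summable : ∀ k : K,
      Summable (fun m : {m : K // m ≠ k} => θ (m : K) * v (m : K) k))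
    (q : ℕ → K → K → ℝ)
    (hq_offdiag : ∀ n k m, k ≠ m →
      q n k m = lam n * R k m * (if k ∈ KW then 1 else 0)
        * (if n ≤ N then 1 else 0) + v k m)
    (hq_diag : ∀ n k,
      q n k k = -((if k ∈ KW then (1:ℝ) else 0) * (if n ≤ N then (1:ℝ) else 0)
          * lam n * (1 - R k k)
        + ∑' m : {m : K // m ≠ k}, v k (m : K))) :
    (∀ n, n ≤ N + 1 → ∀ m : K, ∑' k : K, θ k * q n k m = 0)
    ↔ ((∀ k : K, ∑' m : {m : K // m ≠ k}, θ (m : K) * v (m : K) k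
          = θ k * ∑' m : {m : K // m ≠ k}, v k (m : K))
        ∧ (∀ k ∈ KW, ∑' m : KW, R k (m : K) = 1)
        ∧ (∀ k ∈ KW, ∑' m : KW, θ (m : K) * R (m : K) k = θ k)) := by
  classical
  set c : ℕ → ℝ := fun n => lam n * (if n ≤ N then 1 else 0) with hc
  set Sphi : K → ℝ := fun m => (∑' k : KW, θ (k : K) * R (k : K) m)
      - (if m ∈ KW then θ m else 0) with hSphi
  set Spsi : K → ℝ := fun m => (∑' k : {k : K // k ≠ m}, θ (k : K) * v (k : K) m)
      - θ m * (∑' k : {k : K // k ≠ m}, v m (k : K)) with hSpsi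
  have key : ∀ n m, ∑' k : K, θ k * q n k m = c n * Sphi m + Spsi m := by
    intro n m
    have h1 : HasSum (KW.indicator (fun k => θ k * R k m))
        (∑' k : KW, θ (k : K) * R (k : K) m) :=
      hasSum_subtype_iff_indicator.mp (hθR_summable m).hasSum
    have h2 : HasSum (({k : K | k ≠ m}).indicator (fun k => θ k * v k m))
        (∑' k : {k : K // k ≠ m}, θ (k : K) * v (k : K) m) :=
      hasSum_subtype_iff_indicator.mp (hθv_summable m).hasSum
    have h3 : HasSum (fun k : K => if k = m then (if m ∈ KW then θ m else 0) else 0)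
        (if m ∈ KW then θ m else 0) := hasSum_ite_eq m _
    have h4 : HasSum (fun k : K => if k = m then θ m * v m m else 0)
        (θ m * v m m) := hasSum_ite_eq m _
    have hφ : HasSum (fun k : K => KW.indicator (fun k => θ k * R k m) k
        - (if k = m then (if m ∈ KW then θ m else 0) else 0)) (Sphi m) := h1.sub h3
    have hψ : HasSum (fun k : K => ({k : K | k ≠ m}).indicator (fun k => θ k * v k m) k
        + (if k = m then θ m * v m m else 0))
        ((∑' k : {k : K // k ≠ m}, θ (k : K) * v (k : K) m) + θ m * v m m) := h2.add h4
    have htotal := (hφ.mul_left (c n)).add hψ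
    have hval : c n * Sphi m
        + ((∑' k : {k : K // k ≠ m}, θ (k : K) * v (k : K) m) + θ m * v m m)
        = c n * Sphi m + Spsi m := by
      rw [hv_diag m]; simp [hSpsi]; ring
    rw [hval] at htotal
    have heq : (fun k : K => θ k * q n k m)
        = fun k : K => c n * (KW.indicator (fun k => θ k * R k m) k
            - (if k = m then (if m ∈ KW then θ m else 0) else 0))
          + (({k : K | k ≠ m}).indicator (fun k => θ k * v k m) k
            + (if k = m then θ m * v m m else 0)) := by
      funext k
      by_cases hkm : k = m
      · subst hkm
        rw [hq_diag n k, hv_diag k]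
        by_cases hk : k ∈ KW <;> by_cases hn : n ≤ N <;>
          simp [Set.indicator_apply, hk, hn, hc] <;> ring
      · rw [hq_offdiag n k m hkm]
        by_cases hk : k ∈ KW <;> by_cases hn : n ≤ N <;>
          simp [Set.indicator_apply, hk, hn, hkm, hc] <;> ring
    rw [heq]
    exact htotal.tsum_eq
  constructor
  · intro H
    have hψ0 : ∀ m, Spsi m = 0 := by
      intro m
      have h := H (N + 1) le_rfl m
      rw [key] at h
      have hc0 : c (N + 1) = 0 := by
        have : ¬ (N + 1 ≤ N) := by omega
        simp [hc, this]
      rw [hc0] at h; linarith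
    have hφ0 : ∀ m, Sphi m = 0 := by
      intro m
      have h := H 0 (by omega) m
      rw [key, hψ0] at h
      have hc0 : c 0 = lam 0 := by simp [hc, Nat.zero_le]
      have hl : 0 < lam 0 := hlam 0 (Nat.zero_le N)
      rw [hc0, add_zero] at h
      rcases mul_eq_zero.mp h with h | h
      · exact absurd h (ne_of_gt hl)
      · exact h
    refine ⟨?_, ?_, ?_⟩
    · intro k
      have := hψ0 k
      simp only [hSpsi] at this
      linarith
    · intro k hk
      have hR0 : ∀ m', m' ∉ KW → R k m' = 0 := by
        intro m' hm'
        have h := hφ0 m'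
        simp only [hSphi, hm', if_false, sub_zero] at h
        have hle := Summable.le_tsum (hθR_summable m') (⟨k, hk⟩ : KW)
          (fun j _ => mul_nonneg (hθ_pos _).le (hR_nonneg _ _))
        have hge : 0 ≤ θ k * R k m' := mul_nonneg (hθ_pos _).le (hR_nonneg _ _)
        have hz : θ k * R k m' = 0 := le_antisymm (by rw [h] at hle; exact hle) hge
        rcases mul_eq_zero.mp hz with h' | h'
        · exact absurd h' (ne_of_gt (hθ_pos k))
        · exact h'
      have hsupp : Function.support (fun m' => R k m') ⊆ KW := by
        intro m' hm'
        by_contra hcon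
        exact hm' (hR0 m' hcon)
      exact ((hasSum_subtype_iff_of_support_subset hsupp).mpr (hR_row k)).tsum_eq
    · intro k hk
      have h := hφ0 k
      simp only [hSphi, hk, if_true] at h
      linarith
  · rintro ⟨hV, hCl, hSt⟩ n hn m
    rw [key]
    have hψ0 : Spsi m = 0 := by
      simp only [hSpsi]
      have := hV m
      linarith
    have hφ0 : Sphi m = 0 := by
      by_cases hm : m ∈ KW
      · simp only [hSphi, hm, if_true]
        rw [hSt m hm]; ring
      · have hz : ∀ k' : KW, R (k' : K) m = 0 := by
          intro k'
          have hs := (hR_row (k' : K)).summable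
          have hsubc : Summable (fun x : ↥(KWᶜ) => R (k' : K) (x : K)) := hs.subtype _
          have htot : (∑' x : KW, R (k' : K) (x : K)) + ∑' x : ↥(KWᶜ), R (k' : K) (x : K)
              = ∑' x : K, R (k' : K) x := Summable.tsum_subtype_add_tsum_subtype_compl hs KW
          have h1 : ∑' x : K, R (k' : K) x = 1 := (hR_row _).tsum_eq
          have h2 := hCl (k' : K) k'.2
          have hc0 : ∑' x : ↥(KWᶜ), R (k' : K) (x : K) = 0 := by
            rw [h2, h1] at htot; linarith
          have hm' : m ∈ (KWᶜ : Set K) := hm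
          have hle := Summable.le_tsum hsubc (⟨m, hm'⟩ : ↥(KWᶜ)) (fun j _ => hR_nonneg _ _)
          rw [hc0] at hle
          exact le_antisymm hle (hR_nonneg _ _)
        simp only [hSphi, hm, if_false, sub_zero]
        have : ∀ k' : KW, θ (k' : K) * R (k' : K) m = 0 := by
          intro k'; rw [hz k']; ring
        rw [tsum_congr this, tsum_zero]
    rw [hψ0, hφ0]; ring
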